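/- Fix an integer b ≥ 2, κ_b := π√b/(√2·(b−1)), and β̂ ∈ (0, κ_b). Define M̂_n(x) := x + ((b−1)/(2n))·x² + β̂²(b−1)/(b·n), γ(x,y) := arctan((√b/(β̂√2))·x) + (β̂(b−1)/√(2b))·y, and for ε > 0 let A_ε := {(x,m,n) ∈ [0,∞)×ℕ×ℕ : n ≥ 1 and γ(x, m/n) < π/2 − ε}. Then for every ε > 0 there is a constant C > 0 such that for all (x,m,n) ∈ A_ε, |M̂_n^m(x) − (β̂√2/√b)·tan( arctan((√b/(β̂√2))·x) + β̂·((b−1)/√(2b))·(m/n) )| ≤ C/n. -/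

import Mathlib

open Filter Real

set_option maxHeartbeats 1000000

lemma tanstep (θ h ε' : ℝ) (hθ : 0 ≤ θ) (hh : 0 < h) (hε1 : 0 < ε') (hε2 : ε' ≤ π/4)
    (hsum : θ + h ≤ π/2 - ε') :
    0 ≤ Real.tan (θ + h) - Real.tan θ - h * (1 / Real.cos θ ^ 2) ∧
    Real.tan (θ + h) - Real.tan θ - h * (1 / Real.cos θ ^ 2) ≤ 2 * h^2 / Real.sin ε' ^ 3 := by
  have hpi : (0:ℝ) < π := Real.pi_pos
  have hθ'lt : θ + h < π/2 := by linarith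
  have hθlt : θ < π/2 := by linarith
  have hcθ : 0 < Real.cos θ := Real.cos_pos_of_mem_Ioo ⟨by linarith, hθlt⟩
  have hcθ' : 0 < Real.cos (θ + h) := Real.cos_pos_of_mem_Ioo ⟨by linarith, hθ'lt⟩
  have hδ : 0 < Real.sin ε' := Real.sin_pos_of_pos_of_lt_pi hε1 (by linarith)
  -- cos bounds
  have hδθ' : Real.sin ε' ≤ Real.cos (θ + h) := by
    rw [← Real.cos_pi_div_two_sub]
    exact Real.cos_le_cos_of_nonneg_of_le_pi (by linarith) (by linarith) hsum
  have hδθ : Real.sin ε' ≤ Real.cos θ := by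
    rw [← Real.cos_pi_div_two_sub]
    exact Real.cos_le_cos_of_nonneg_of_le_pi (by linarith) (by linarith) (by linarith)
  -- key rewriting
  have hsinh : Real.sin h = Real.sin (θ+h) * Real.cos θ - Real.cos (θ+h) * Real.sin θ := by
    rw [← Real.sin_sub]; ring_nf
  have hE : Real.tan (θ + h) - Real.tan θ - h * (1 / Real.cos θ ^ 2)
      = (Real.sin h * Real.cos θ - h * Real.cos (θ+h)) / (Real.cos θ ^ 2 * Real.cos (θ+h)) := by
    rw [Real.tan_eq_sin_div_cos, Real.tan_eq_sin_div_cos]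
    rw [eq_div_iff (by positivity)]
    have e1 : Real.sin (θ+h) / Real.cos (θ+h) * Real.cos (θ+h) = Real.sin (θ+h) :=
      div_mul_cancel₀ _ hcθ'.ne'
    have e2 : Real.sin θ / Real.cos θ * Real.cos θ = Real.sin θ := div_mul_cancel₀ _ hcθ.ne'
    have e3 : 1 / Real.cos θ ^ 2 * Real.cos θ ^ 2 = 1 := one_div_mul_cancel (by positivity)
    linear_combination (Real.cos θ ^ 2) * e1 - (Real.cos θ * Real.cos (θ+h)) * e2
      - (h * Real.cos (θ+h)) * e3 - Real.cos θ * hsinh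
  set N := Real.sin h * Real.cos θ - h * Real.cos (θ+h) with hN
  have hNsplit : N = Real.cos θ * (Real.sin h - h * Real.cos h) + h * Real.sin θ * Real.sin h := by
    rw [hN, Real.cos_add]; ring
  have hhlt : h < π/2 := by linarith
  have hch : 0 < Real.cos h := Real.cos_pos_of_mem_Ioo ⟨by linarith, hhlt⟩
  have hsh_pos : 0 ≤ Real.sin h := Real.sin_nonneg_of_nonneg_of_le_pi hh.le (by linarith)
  have hsθ : 0 ≤ Real.sin θ := Real.sin_nonneg_of_nonneg_of_le_pi hθ (by linarith)
  have htanh : h < Real.tan h := Real.lt_tan hh hhlt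
  have hkey : h * Real.cos h ≤ Real.sin h := by
    have := Real.tan_eq_sin_div_cos h
    rw [this] at htanh
    calc h * Real.cos h ≤ (Real.sin h / Real.cos h) * Real.cos h := by
          exact mul_le_mul_of_nonneg_right htanh.le hch.le
      _ = Real.sin h := by field_simp
  have hNnonneg : 0 ≤ N := by
    rw [hNsplit]
    have : 0 ≤ Real.sin h - h * Real.cos h := by linarith
    positivity
  have hsinle : Real.sin h ≤ h := Real.sin_le hh.le
  have honecos : 1 - Real.cos h ≤ h^2/2 := by
    have h1 : Real.sin (h/2) ^ 2 = 1/2 - Real.cos (2*(h/2)) / 2 := Real.sin_sq_eq_half_sub (h/2)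
    rw [show 2*(h/2) = h by ring] at h1
    have h2 : Real.sin (h/2) ≤ h/2 := Real.sin_le (by linarith)
    have h3 : 0 ≤ Real.sin (h/2) := Real.sin_nonneg_of_nonneg_of_le_pi (by linarith) (by linarith)
    nlinarith
  have hcos1 : Real.cos θ ≤ 1 := Real.cos_le_one θ
  have hsθ1 : Real.sin θ ≤ 1 := Real.sin_le_one θ
  have hNle : N ≤ 2 * h^2 := by
    rw [hNsplit]
    have e1 : Real.sin h - h * Real.cos h ≤ h * (1 - Real.cos h) := by nlinarith
    have hX : 0 ≤ Real.sin h - h * Real.cos h := by linarith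
    have e2 : Real.cos θ * (Real.sin h - h * Real.cos h) ≤ h * (1 - Real.cos h) :=
      le_trans (mul_le_of_le_one_left hX hcos1) e1
    have hh2 : h ≤ 2 := by nlinarith [Real.pi_le_four]
    have e3 : h * (1 - Real.cos h) ≤ h^2 := by
      nlinarith [mul_le_mul_of_nonneg_left honecos hh.le]
    have e4 : h * Real.sin θ * Real.sin h ≤ h^2 := by
      have : Real.sin θ * Real.sin h ≤ 1 * h := mul_le_mul hsθ1 hsinle hsh_pos zero_le_one
      nlinarith
    linarith
  constructor
  · rw [hE]; exact div_nonneg hNnonneg (by positivity)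
  · rw [hE]
    have d1 : Real.sin ε' ^ 2 ≤ Real.cos θ ^ 2 := by nlinarith
    have hden : Real.sin ε' ^ 3 ≤ Real.cos θ ^ 2 * Real.cos (θ+h) := by
      nlinarith [mul_le_mul d1 hδθ' hδ.le (sq_nonneg (Real.cos θ))]
    exact div_le_div₀ (by positivity) hNle (by positivity) hden


/-- For `b ≥ 2`, `κ_b = π√b/(√2(b−1))`, `β̂ ∈ (0, κ_b)`, the maps
`M̂_n(x) = x + ((b−1)/(2n))x² + β̂²(b−1)/(bn)` and
`γ(x,y) = arctan((√b/(β̂√2))x) + (β̂(b−1)/√(2b))y`: for every `ε > 0` there is `C > 0`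
such that whenever `x ≥ 0`, `n ≥ 1`, and `γ(x, m/n) < π/2 − ε`,
`|M̂_n^[m](x) − (β̂√2/√b)·tan(arctan((√b/(β̂√2))x) + β̂((b−1)/√(2b))(m/n))| ≤ C/n`. -/
theorem stmt17 (b : ℕ) (hb : 2 ≤ b) (kappa : ℝ)
    (hkappa : kappa = Real.pi * Real.sqrt b / (Real.sqrt 2 * ((b : ℝ) - 1)))
    (beta : ℝ) (hbeta : 0 < beta) (hbetalt : beta < kappa)
    (Mhat : ℕ → ℝ → ℝ)
    (hMhat : ∀ n : ℕ, ∀ x : ℝ,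
      Mhat n x = x + (((b : ℝ) - 1) / (2 * n)) * x ^ 2
        + beta ^ 2 * ((b : ℝ) - 1) / ((b : ℝ) * n))
    (gamma : ℝ → ℝ → ℝ)
    (hgamma : ∀ x y : ℝ,
      gamma x y = Real.arctan ((Real.sqrt b / (beta * Real.sqrt 2)) * x)
        + (beta * ((b : ℝ) - 1) / Real.sqrt (2 * b)) * y) :
    ∀ ε : ℝ, 0 < ε → ∃ C : ℝ, 0 < C ∧
      ∀ (x : ℝ) (m n : ℕ), 0 ≤ x → 1 ≤ n →
        gamma x ((m : ℝ) / n) < Real.pi / 2 - ε →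
        |(Mhat n)^[m] x
          - (beta * Real.sqrt 2 / Real.sqrt b) *
            Real.tan (Real.arctan ((Real.sqrt b / (beta * Real.sqrt 2)) * x)
              + beta * (((b : ℝ) - 1) / Real.sqrt (2 * b)) * ((m : ℝ) / n))|
          ≤ C / n := by
  intro ε hε
  have hbR : (2:ℝ) ≤ (b:ℝ) := by exact_mod_cast hb
  have hb0 : (0:ℝ) < (b:ℝ) := by linarith
  have hb1 : (0:ℝ) < (b:ℝ) - 1 := by linarith
  have hsqb : 0 < Real.sqrt b := Real.sqrt_pos.2 hb0
  have hsq2 : (0:ℝ) < Real.sqrt 2 := Real.sqrt_pos.2 (by norm_num)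
  have hsqb2 : Real.sqrt b ^ 2 = (b:ℝ) := Real.sq_sqrt hb0.le
  have hsq22 : Real.sqrt 2 ^ 2 = 2 := Real.sq_sqrt (by norm_num)
  have hsqrt2b : Real.sqrt (2*(b:ℝ)) = Real.sqrt 2 * Real.sqrt b := Real.sqrt_mul (by norm_num) _
  have hpi : (0:ℝ) < π := Real.pi_pos
  set s : ℝ := Real.sqrt b / (beta * Real.sqrt 2) with hs
  set iv : ℝ := beta * Real.sqrt 2 / Real.sqrt b with hiv
  set r : ℝ := beta * (((b:ℝ)-1) / Real.sqrt (2*(b:ℝ))) with hr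
  set c : ℝ := beta^2 * ((b:ℝ)-1) / (b:ℝ) with hc
  set a : ℝ := ((b:ℝ)-1)/2 with ha
  have hspos : 0 < s := by rw [hs]; positivity
  have hivpos : 0 < iv := by rw [hiv]; positivity
  have hsqrt2bpos : 0 < Real.sqrt (2*(b:ℝ)) := by rw [hsqrt2b]; positivity
  have hrpos : 0 < r := by rw [hr]; positivity
  have hcpos : 0 < c := by rw [hc]; positivity
  have hapos : 0 < a := by rw [ha]; positivity
  have hsiv : s * iv = 1 := by rw [hs, hiv]; field_simp
  have H1 : a * iv^2 = c := by
    rw [ha, hiv, hc, div_pow, mul_pow, hsqb2, hsq22]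
    field_simp
  have hbb : Real.sqrt b * Real.sqrt b = (b:ℝ) := Real.mul_self_sqrt hb0.le
  have H2 : iv * r = c := by
    rw [hiv, hr, hc, hsqrt2b]
    field_simp
    linear_combination (-1:ℝ) * hbb
  set ε' : ℝ := min ε (π/4) with hε'
  have hε'pos : 0 < ε' := lt_min hε (by positivity)
  have hε'le : ε' ≤ π/4 := min_le_right _ _
  have hε'leε : ε' ≤ ε := min_le_left _ _
  set δ : ℝ := Real.sin ε' with hδdef
  have hδ : 0 < δ := Real.sin_pos_of_pos_of_lt_pi hε'pos (by linarith)
  set B : ℝ := iv * Real.tan (π/2 - ε') with hB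
  have hBpos : 0 < B := by
    rw [hB]
    have : 0 < Real.tan (π/2 - ε') :=
      Real.tan_pos_of_pos_of_lt_pi_div_two (by linarith) (by linarith)
    positivity
  set L : ℝ := 2 * a * B with hL
  have hLpos : 0 < L := by rw [hL]; positivity
  set K : ℝ := iv * (2*r^2) / δ^3 with hK
  have hKpos : 0 < K := by rw [hK]; positivity
  set Tm : ℝ := π / (2*r) with hTm
  have hTmpos : 0 < Tm := by rw [hTm]; positivity
  refine ⟨K * Tm * Real.exp (L*Tm) + 1, by positivity, ?_⟩
  intro x m n hx hn hγ
  have hn0 : (0:ℝ) < n := by exact_mod_cast hn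
  have hn0' : (n:ℝ) ≠ 0 := hn0.ne'
  rw [hgamma] at hγ
  set θ0 : ℝ := Real.arctan (s * x) with hθ0def
  have hθ0 : 0 ≤ θ0 := by
    rw [hθ0def, ← Real.arctan_zero]
    exact Real.arctan_strictMono.monotone (mul_nonneg hspos.le hx)
  have hθ0lt : θ0 < π/2 := Real.arctan_lt_pi_div_two _
  have hγ' : θ0 + r * ((m:ℝ)/n) < π/2 - ε := by
    have hco : beta * ((b:ℝ)-1) / Real.sqrt (2*(b:ℝ)) = r := by rw [hr]; ring
    rw [← hco]; exact hγ
  have hθm' : θ0 + r * ((m:ℝ)/n) ≤ π/2 - ε' := by linarith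
  set Y : ℕ → ℝ := fun k => iv * Real.tan (θ0 + r * ((k:ℝ)/n)) with hY
  set X : ℕ → ℝ := fun k => (Mhat n)^[k] x with hX
  have hθmono : ∀ k : ℕ, k ≤ m → θ0 + r * ((k:ℝ)/n) ≤ θ0 + r * ((m:ℝ)/n) := by
    intro k hk
    have hkm : (k:ℝ) ≤ (m:ℝ) := by exact_mod_cast hk
    gcongr
  have hM' : ∀ z : ℝ, Mhat n z = z + (a * z^2 + c)/n := by
    intro z
    rw [hMhat n z, ha, hc]
    field_simp
    ring
  have key : ∀ k : ℕ, k ≤ m →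
      0 ≤ X k ∧ X k ≤ Y k ∧ Y k - X k ≤ K/(n^2) * k * (1 + L/n)^k := by
    intro k
    induction k with
    | zero =>
      intro _
      have hY0 : Y 0 = x := by
        show iv * Real.tan (θ0 + r * ((Nat.cast 0 :ℝ)/n)) = x
        rw [Nat.cast_zero, zero_div, mul_zero, add_zero, hθ0def, Real.tan_arctan]
        calc iv * (s * x) = (s * iv) * x := by ring
          _ = x := by rw [hsiv]; ring
      have hX0 : X 0 = x := rfl
      refine ⟨by rw [hX0]; exact hx, by rw [hX0, hY0], by rw [hX0, hY0]; simp⟩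
    | succ k ih =>
      intro hk1
      obtain ⟨hX0, hXY, he⟩ := ih (Nat.le_of_succ_le hk1)
      set θ : ℝ := θ0 + r * ((k:ℝ)/n) with hθdef
      have hθsucc : θ0 + r * (((k+1:ℕ):ℝ)/n) = θ + r/n := by
        rw [hθdef]; push_cast; field_simp; ring
      have hθnn : 0 ≤ θ := by
        have : 0 ≤ r * ((k:ℝ)/n) := by positivity
        rw [hθdef]; linarith
      have hrn : 0 < r/n := by positivity
      have hsum : θ + r/n ≤ π/2 - ε' := by
        have h5 := hθmono (k+1) hk1
        rw [hθsucc] at h5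
        linarith
      obtain ⟨hD0, hDle⟩ := tanstep θ (r/n) ε' hθnn hrn hε'pos hε'le hsum
      set D : ℝ := Real.tan (θ + r/n) - Real.tan θ - (r/n) * (1 / Real.cos θ ^ 2) with hD
      have hnegpi : -(π/2) < θ := lt_of_lt_of_le (by linarith : -(π/2) < (0:ℝ)) hθnn
      have hθltpi : θ < π/2 := by linarith
      have hcθ : 0 < Real.cos θ := Real.cos_pos_of_mem_Ioo ⟨hnegpi, hθltpi⟩
      have hcθne : Real.cos θ ≠ 0 := hcθ.ne'
      have htansq : Real.tan θ ^ 2 + 1 = 1 / Real.cos θ ^ 2 := by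
        rw [Real.tan_eq_sin_div_cos, div_pow]
        field_simp
        exact Real.sin_sq_add_cos_sq θ
      have hYk : Y k = iv * Real.tan θ := rfl
      have hYk1 : Y (k+1) = iv * Real.tan (θ + r/n) := by
        show iv * Real.tan (θ0 + r * (((k+1:ℕ):ℝ)/n)) = _
        rw [hθsucc]
      have hfY : a * (Y k)^2 + c = c * (1/Real.cos θ ^2) := by
        rw [hYk]
        have h6 : a * (iv * Real.tan θ)^2 + c = c * (Real.tan θ^2 + 1) := by
          linear_combination (Real.tan θ)^2 * H1
        rw [h6, htansq]
      have hYstep : Y (k+1) = Y k + (a*(Y k)^2 + c)/n + iv * D := by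
        rw [hYk1, hYk, hfY, hD]
        linear_combination (1/(Real.cos θ^2 * (n:ℝ))) * H2
      have hXsucc : X (k+1) = X k + (a * (X k)^2 + c)/n := by
        show (Mhat n)^[k+1] x = _
        rw [Function.iterate_succ_apply']
        exact hM' _
      have hX0' : 0 ≤ X (k+1) := by
        rw [hXsucc]
        have : 0 ≤ (a * (X k)^2 + c)/n := by positivity
        linarith
      have hivD0 : 0 ≤ iv * D := mul_nonneg hivpos.le hD0
      have hXY' : X (k+1) ≤ Y (k+1) := by
        rw [hXsucc, hYstep]
        have h1 : a*(X k)^2 ≤ a*(Y k)^2 :=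
          mul_le_mul_of_nonneg_left (pow_le_pow_left₀ hX0 hXY 2) hapos.le
        have h3 : (a*(X k)^2 + c)/n ≤ (a*(Y k)^2 + c)/n :=
          (div_le_div_iff_of_pos_right hn0).mpr (by linarith only [h1])
        calc X k + (a * (X k)^2 + c)/n ≤ Y k + (a * (Y k)^2 + c)/n := add_le_add hXY h3
          _ ≤ Y k + (a * (Y k)^2 + c)/n + iv * D := le_add_of_nonneg_right hivD0
      have hYB : Y k ≤ B := by
        rw [hYk, hB]
        have htle : Real.tan θ ≤ Real.tan (π/2 - ε') := by
          rcases lt_or_eq_of_le (show θ ≤ π/2 - ε' by linarith) with hlt | heq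
          · exact (Real.tan_lt_tan_of_nonneg_of_lt_pi_div_two hθnn (by linarith) hlt).le
          · rw [heq]
        exact mul_le_mul_of_nonneg_left htle hivpos.le
      have hDK : iv * D ≤ K / n^2 := by
        calc iv*D ≤ iv * (2*(r/n)^2/δ^3) := mul_le_mul_of_nonneg_left hDle hivpos.le
          _ = K/n^2 := by rw [hK]; field_simp
      have hq1 : a*((Y k)^2 - (X k)^2) ≤ L * (Y k - X k) := by
        have hsum2 : Y k + X k ≤ 2*B := by linarith
        have hmm : (Y k + X k)*(Y k - X k) ≤ 2*B*(Y k - X k) :=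
          mul_le_mul_of_nonneg_right hsum2 (sub_nonneg.2 hXY)
        calc a*((Y k)^2 - (X k)^2) = a*((Y k + X k)*(Y k - X k)) := by ring
          _ ≤ a*(2*B*(Y k - X k)) := mul_le_mul_of_nonneg_left hmm hapos.le
          _ = L*(Y k - X k) := by rw [hL]; ring
      have hstepEq : Y (k+1) - X (k+1)
          = (Y k - X k) + (a*((Y k)^2 - (X k)^2))/n + iv*D := by
        rw [hXsucc, hYstep]; ring
      have hrec : Y (k+1) - X (k+1) ≤ (1+L/n)*(Y k - X k) + K/n^2 := by
        rw [hstepEq]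
        have h7 : (a*((Y k)^2 - (X k)^2))/n ≤ (L*(Y k - X k))/n :=
          (div_le_div_iff_of_pos_right hn0).mpr hq1
        have h8 : (L*(Y k - X k))/n = L/n*(Y k - X k) := by ring
        linarith
      have hqk : (1:ℝ) ≤ (1+L/n)^(k+1) := by
        apply one_le_pow₀
        have : 0 ≤ L/n := by positivity
        linarith
      have hmain : (1+L/n)*(Y k - X k) + K/n^2 ≤ K/n^2 * ((k+1:ℕ):ℝ) * (1+L/n)^(k+1) := by
        have hLn0 : (0:ℝ) ≤ 1 + L/n := by positivity
        have h9 : (1+L/n)*(Y k - X k) ≤ (1+L/n)*(K/(n^2) * k * (1 + L/n)^k) :=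
          mul_le_mul_of_nonneg_left he hLn0
        have h10 : (1+L/n)*(K/(n^2) * k * (1 + L/n)^k) = K/n^2 * k * (1+L/n)^(k+1) := by
          rw [pow_succ]; ring
        have hKn : (0:ℝ) ≤ K/n^2 := by positivity
        have h11 : K/n^2 * k * (1+L/n)^(k+1) + K/n^2 ≤ K/n^2 * ((k+1:ℕ):ℝ) * (1+L/n)^(k+1) := by
          push_cast
          linarith [mul_nonneg hKn (sub_nonneg.2 hqk)]
        linarith
      exact ⟨hX0', hXY', by linarith⟩
  obtain ⟨hXm0, hXYm, hem⟩ := key m le_rfl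
  have hmTm : (m:ℝ)/n ≤ Tm := by
    have h1 : r * ((m:ℝ)/n) ≤ π/2 := by linarith
    rw [hTm]
    rw [le_div_iff₀ (by positivity)]
    calc (m:ℝ)/n * (2*r) = 2 * (r * ((m:ℝ)/n)) := by ring
      _ ≤ 2 * (π/2) := by linarith
      _ = π := by ring
  have hpow : (1+L/n)^m ≤ Real.exp (L*Tm) := by
    have h1 : 1 + L/n ≤ Real.exp (L/n) := by linarith [Real.add_one_le_exp (L/n)]
    have h2 : (1+L/n)^m ≤ (Real.exp (L/n))^m := pow_le_pow_left₀ (by positivity) h1 m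
    rw [← Real.exp_nat_mul] at h2
    have h3 : (m:ℝ) * (L/n) ≤ L * Tm := by
      have h4 : (m:ℝ)*(L/n) = L * ((m:ℝ)/n) := by ring
      rw [h4]; exact mul_le_mul_of_nonneg_left hmTm hLpos.le
    exact h2.trans (Real.exp_le_exp.2 h3)
  have hfin : K/n^2 * (m:ℝ) * (1+L/n)^m ≤ (K*Tm*Real.exp (L*Tm) + 1)/n := by
    have hmn : (m:ℝ) ≤ Tm * n := by
      rw [div_le_iff₀ hn0] at hmTm; linarith
    have e1 : K/n^2 * (m:ℝ) * (1+L/n)^m ≤ K/n^2 * (m:ℝ) * Real.exp (L*Tm) :=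
      mul_le_mul_of_nonneg_left hpow (by positivity)
    have e2 : K/n^2 * (m:ℝ) * Real.exp (L*Tm) ≤ K/n^2 * (Tm*n) * Real.exp (L*Tm) := by
      apply mul_le_mul_of_nonneg_right _ (Real.exp_pos _).le
      exact mul_le_mul_of_nonneg_left hmn (by positivity)
    have e3 : K/n^2 * (Tm*n) * Real.exp (L*Tm) = (K*Tm*Real.exp (L*Tm))/n := by
      field_simp
    have e4 : (K*Tm*Real.exp (L*Tm))/n ≤ (K*Tm*Real.exp (L*Tm)+1)/n := by
      gcongr
      linarith
    linarith
  have hgoalX : (Mhat n)^[m] x = X m := rfl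
  have hgoalY : iv * Real.tan (θ0 + r * ((m:ℝ)/n)) = Y m := rfl
  rw [hgoalX, hgoalY]
  have habs : |X m - Y m| = Y m - X m := by
    rw [abs_sub_comm, abs_of_nonneg (by linarith)]
  rw [habs]
  linarith
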